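/- Let R be a commutative ring. An R-module M is both Gorenstein injective and in ^⊥GI if and only if M is injective; that is, GI ∩ ^⊥GI equals the class of injective R-modules. -/

import Mathlib

open CategoryTheory Opposite Limits MonoidalCategory

universe u

variable {R : Type u} [CommRing R]

/-- `Q` is a Gorenstein projective module: it is the cokernel `Coker (P₁ → P₀)` of a totally
acyclic complex of projective modules, i.e. an exact complex of projectives which stays exact
under `Hom(-, P)` for every projective `P`. -/
def IsGorensteinProjective (Q : ModuleCat.{u} R) : Prop :=
  ∃ C : ChainComplex (ModuleCat.{u} R) ℤ,
    (∀ i, Projective (C.X i)) ∧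
    (∀ i, C.ExactAt i) ∧
    Nonempty (Q ≅ cokernel (C.d 1 0)) ∧
    ∀ P : ModuleCat.{u} R, Projective P →
      ∀ (i : ℤ) (f : C.X i ⟶ P), C.d (i + 1) i ≫ f = 0 →
        ∃ g : C.X (i - 1) ⟶ P, f = C.d i (i - 1) ≫ g

/-- `E` is a Gorenstein injective module: it is the kernel `Ker (I⁰ → I¹)` of a totally acyclic
complex of injective modules, i.e. an exact complex of injectives which stays exact under
`Hom(I, -)` for every injective `I`. -/
def IsGorensteinInjective (E : ModuleCat.{u} R) : Prop :=
  ∃ C : CochainComplex (ModuleCat.{u} R) ℤ,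
    (∀ i, Injective (C.X i)) ∧
    (∀ i, C.ExactAt i) ∧
    Nonempty (E ≅ kernel (C.d 0 1)) ∧
    ∀ I : ModuleCat.{u} R, Injective I →
      ∀ (i : ℤ) (f : I ⟶ C.X i), f ≫ C.d i (i + 1) = 0 →
        ∃ g : I ⟶ C.X (i - 1), f = g ≫ C.d (i - 1) i

/-- `M` is a Gorenstein flat module: it is a cokernel in an exact complex of flat modules which
remains exact after tensoring with any injective module. -/
def IsGorensteinFlat (M : ModuleCat.{u} R) : Prop :=
  ∃ C : ChainComplex (ModuleCat.{u} R) ℤ,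
    (∀ i, Module.Flat R (C.X i)) ∧
    (∀ i, C.ExactAt i) ∧
    Nonempty (M ≅ cokernel (C.d 1 0)) ∧
    ∀ I : ModuleCat.{u} R, Injective I → ∀ i : ℤ,
      (((tensorLeft I).mapHomologicalComplex (ComplexShape.down ℤ)).obj C).ExactAt i

/-- A short exact sequence `0 → X₁ → X₂ → X₃ → 0` is `𝒳`-pure exact if
`Hom(U, X₂) → Hom(U, X₃)` is surjective for every `U ∈ 𝒳`. -/
def XPureExact (𝒳 : ModuleCat.{u} R → Prop) (S : ShortComplex (ModuleCat.{u} R)) : Prop :=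
  ∀ U : ModuleCat.{u} R, 𝒳 U → ∀ φ : U ⟶ S.X₃, ∃ ψ : U ⟶ S.X₂, ψ ≫ S.g = φ

/-- A short exact sequence `0 → X₁ → X₂ → X₃ → 0` is `𝒳`-copure exact if
`Hom(X₂, V) → Hom(X₁, V)` is surjective for every `V ∈ 𝒳`. -/
def XCopureExact (𝒳 : ModuleCat.{u} R → Prop) (S : ShortComplex (ModuleCat.{u} R)) : Prop :=
  ∀ V : ModuleCat.{u} R, 𝒳 V → ∀ φ : S.X₁ ⟶ V, ∃ ψ : S.X₂ ⟶ V, S.f ≫ ψ = φ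

/-- `M` is `𝒳`-pure flat: `M ⊗ -` leaves every `𝒳`-pure exact short exact sequence exact. -/
def XPureFlat (𝒳 : ModuleCat.{u} R → Prop) (M : ModuleCat.{u} R) : Prop :=
  ∀ S : ShortComplex (ModuleCat.{u} R), S.ShortExact → XPureExact 𝒳 S →
    Function.Injective ((tensorLeft M).map S.f)

/-- `N` is `𝒳`-pure injective: `Hom(-, N)` leaves every `𝒳`-pure exact short exact
sequence exact. -/
def XPureInjective (𝒳 : ModuleCat.{u} R → Prop) (N : ModuleCat.{u} R) : Prop :=
  ∀ S : ShortComplex (ModuleCat.{u} R), S.ShortExact → XPureExact 𝒳 S →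
    ∀ φ : S.X₁ ⟶ N, ∃ ψ : S.X₂ ⟶ N, S.f ≫ ψ = φ

/-- `M` is `𝒳`-pure projective: `Hom(M, -)` leaves every `𝒳`-pure exact short exact
sequence exact. -/
def XPureProjective (𝒳 : ModuleCat.{u} R → Prop) (M : ModuleCat.{u} R) : Prop :=
  ∀ S : ShortComplex (ModuleCat.{u} R), S.ShortExact → XPureExact 𝒳 S →
    ∀ φ : M ⟶ S.X₃, ∃ ψ : M ⟶ S.X₂, ψ ≫ S.g = φ

/-- `GP`-pure exactness: `Hom(Q, -)` leaves the sequence exact for all Gorenstein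
projective `Q`. -/
abbrev GPPureExact (S : ShortComplex (ModuleCat.{u} R)) : Prop :=
  XPureExact IsGorensteinProjective S

/-- `GI`-copure exactness: `Hom(-, E)` leaves the sequence exact for all Gorenstein
injective `E`. -/
abbrev GICopureExact (S : ShortComplex (ModuleCat.{u} R)) : Prop :=
  XCopureExact IsGorensteinInjective S

abbrev GPPureProjective (M : ModuleCat.{u} R) : Prop :=
  XPureProjective IsGorensteinProjective M

abbrev GPPureInjective (M : ModuleCat.{u} R) : Prop :=
  XPureInjective IsGorensteinProjective M

abbrev GPPureFlat (M : ModuleCat.{u} R) : Prop :=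
  XPureFlat IsGorensteinProjective M

/-- `Ext^n_R(M, N)` vanishes. -/
abbrev extVanish (n : ℕ) (M N : ModuleCat.{u} R) : Prop :=
  Subsingleton (((Ext R (ModuleCat.{u} R) n).obj (op M)).obj N)

/-- `M` belongs to `GP^⊥`. -/
abbrev MemGPperp (M : ModuleCat.{u} R) : Prop :=
  ∀ Q : ModuleCat.{u} R, IsGorensteinProjective Q → extVanish 1 Q M

/-- `M` belongs to `^⊥GI`. -/
abbrev MemPerpGI (M : ModuleCat.{u} R) : Prop :=
  ∀ E : ModuleCat.{u} R, IsGorensteinInjective E → extVanish 1 M E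

/-- Gorenstein projective dimension of `M` is at most `n`: there is a resolution
`0 → G_n → ⋯ → G_0 → M → 0` by Gorenstein projective modules. -/
def GpdLE : ℕ → ModuleCat.{u} R → Prop
  | 0, M => IsGorensteinProjective M
  | n + 1, M =>
    ∃ S : ShortComplex (ModuleCat.{u} R), S.ShortExact ∧ Nonempty (S.X₃ ≅ M) ∧
      IsGorensteinProjective S.X₂ ∧ GpdLE n S.X₁

/-- Gorenstein injective dimension of `M` is at most `n`: there is a coresolution
`0 → M → E⁰ → ⋯ → Eⁿ → 0` by Gorenstein injective modules. -/
def GidLE : ℕ → ModuleCat.{u} R → Prop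
  | 0, M => IsGorensteinInjective M
  | n + 1, M =>
    ∃ S : ShortComplex (ModuleCat.{u} R), S.ShortExact ∧ Nonempty (S.X₁ ≅ M) ∧
      IsGorensteinInjective S.X₂ ∧ GidLE n S.X₃

/-- Gorenstein flat dimension of `M` is at most `n`. -/
def GfdLE : ℕ → ModuleCat.{u} R → Prop
  | 0, M => IsGorensteinFlat M
  | n + 1, M =>
    ∃ S : ShortComplex (ModuleCat.{u} R), S.ShortExact ∧ Nonempty (S.X₃ ≅ M) ∧
      IsGorensteinFlat S.X₂ ∧ GfdLE n S.X₁

/-- The Pontryagin dual `M⁺ = Hom_ℤ(M, ℚ/ℤ)` as an `R`-module. -/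
noncomputable def characterDual (M : ModuleCat.{u} R) : ModuleCat.{u} R :=
  ModuleCat.of R (CharacterModule M)

/-- `R` is a coherent ring: every finitely generated ideal is finitely presented. -/
def IsCoherentRing (R : Type u) [CommRing R] : Prop :=
  ∀ I : Ideal R, I.FG → Module.FinitePresentation R I

/-- `φ : G → M` is a Gorenstein projective precover. -/
def IsGPPrecover {G M : ModuleCat.{u} R} (φ : G ⟶ M) : Prop :=
  IsGorensteinProjective G ∧
    ∀ G' : ModuleCat.{u} R, IsGorensteinProjective G' →
      ∀ ψ : G' ⟶ M, ∃ χ : G' ⟶ G, χ ≫ φ = ψ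

/-- The short exact sequence `0 → Im d_{i+1} → X_i → Im d_i → 0` extracted from a complex. -/
noncomputable def imagesShortComplex (C : ChainComplex (ModuleCat.{u} R) ℤ) (i : ℤ) :
    ShortComplex (ModuleCat.{u} R) :=
  ShortComplex.mk (image.ι (C.d (i + 1) i)) (factorThruImage (C.d i (i - 1)))
    (by
      rw [← cancel_epi (factorThruImage (C.d (i + 1) i)),
        ← cancel_mono (image.ι (C.d i (i - 1)))]
      simp)

section Aux13

variable {R : Type u} [CommRing R]

/-- Elementwise exactness criterion for complexes of modules. -/
lemma exactAt_iff_elem {ι : Type} {cs : ComplexShape ι}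
    (K : HomologicalComplex (ModuleCat.{u} R) cs) (a b c : ι)
    (hab : cs.prev b = a) (hbc : cs.next b = c) :
    K.ExactAt b ↔ ∀ x : K.X b, K.d b c x = 0 → ∃ y : K.X a, K.d a b y = x := by
  rw [K.exactAt_iff' a b c hab hbc]
  exact (K.sc' a b c).moduleCat_exact_iff

lemma exactAt_iff_elemZ (K : CochainComplex (ModuleCat.{u} R) ℤ) (a b c : ℤ)
    (hab : a + 1 = b) (hbc : b + 1 = c) :
    K.ExactAt b ↔ ∀ x : K.X b, K.d b c x = 0 → ∃ y : K.X a, K.d a b y = x :=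
  exactAt_iff_elem K a b c (ComplexShape.prev_eq' _ (by simpa using hab))
    (ComplexShape.next_eq' _ (by simpa using hbc))

lemma d_eqToHom (K : CochainComplex (ModuleCat.{u} R) ℤ) {a b b' : ℤ} (h : b = b') :
    K.d a b' = K.d a b ≫ eqToHom (by rw [h]) := by subst h; simp

lemma eqToHom_d (K : CochainComplex (ModuleCat.{u} R) ℤ) {a a' b : ℤ} (h : a = a') :
    K.d a b = eqToHom (congrArg K.X h) ≫ K.d a' b := by subst h; simp

noncomputable def kernelDCongr (K : CochainComplex (ModuleCat.{u} R) ℤ) {a a' b b' : ℤ}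
    (ha : a = a') (hb : b = b') : (kernel (K.d a b) : ModuleCat.{u} R) ≅ kernel (K.d a' b') := by
  subst ha; subst hb; exact Iso.refl _

/-- The shift of a cochain complex by `n`, defined naively. -/
def shiftCC (K : CochainComplex (ModuleCat.{u} R) ℤ) (n : ℤ) :
    CochainComplex (ModuleCat.{u} R) ℤ where
  X i := K.X (i + n)
  d i j := K.d (i + n) (j + n)
  shape i j h := K.shape _ _ (by
    intro hc
    exact h (by change i + 1 = j; change i + n + 1 = j + n at hc; omega))
  d_comp_d' i j k _ _ := K.d_comp_d _ _ _

/-- In a totally acyclic complex of injectives, every kernel is Gorenstein injective. -/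
lemma ker_d_isGI (C : CochainComplex (ModuleCat.{u} R) ℤ)
    (hInj : ∀ i, Injective (C.X i)) (hex : ∀ i, C.ExactAt i)
    (hLift : ∀ I : ModuleCat.{u} R, Injective I →
      ∀ (i : ℤ) (f : I ⟶ C.X i), f ≫ C.d i (i + 1) = 0 →
        ∃ g : I ⟶ C.X (i - 1), f = g ≫ C.d (i - 1) i) (n : ℤ) :
    IsGorensteinInjective (kernel (C.d n (n + 1))) := by
  refine ⟨shiftCC C n, fun i => hInj (i + n), ?_, ⟨kernelDCongr C (by omega) (by omega)⟩, ?_⟩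
  · intro i
    rw [exactAt_iff_elemZ (shiftCC C n) (i - 1) i (i + 1) (by omega) (by omega)]
    have h := (exactAt_iff_elemZ C (i - 1 + n) (i + n) (i + 1 + n)
      (by omega) (by omega)).1 (hex (i + n))
    exact h
  · intro I hI i f hf
    have hf' : f ≫ C.d (i + n) ((i + n) + 1) = 0 := by
      have hE : (i + n) + 1 = i + 1 + n := by omega
      have h2 : (f ≫ C.d (i + n) ((i + n) + 1)) ≫ eqToHom (congrArg C.X hE) = 0 := by
        refine (Category.assoc _ _ _).trans ?_
        erw [← d_eqToHom C hE]
        exact hf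
      have h3 := congrArg (fun t => t ≫ eqToHom (congrArg C.X hE).symm) h2
      simpa using h3
    obtain ⟨g, hg⟩ := hLift I hI (i + n) f hf'
    refine ⟨g ≫ eqToHom (congrArg C.X (show (i + n) - 1 = i - 1 + n by omega)), ?_⟩
    show f = _ ≫ C.d (i - 1 + n) (i + n)
    erw [hg, Category.assoc, ← eqToHom_d C (show (i + n) - 1 = i - 1 + n by omega)]

/-- The map `(a, b) ↦ (b, 0)` on `M × M`. -/
def eMap (M : ModuleCat.{u} R) : ModuleCat.of R (M × M) ⟶ ModuleCat.of R (M × M) :=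
  ModuleCat.ofHom ((LinearMap.inl R M M).comp (LinearMap.snd R M M))

lemma eMap_comp_eMap (M : ModuleCat.{u} R) : eMap M ≫ eMap M = 0 := by
  apply ModuleCat.hom_ext
  apply LinearMap.ext
  intro x
  rfl

/-- The totally acyclic complex `⋯ → M ⊕ M → M ⊕ M → ⋯` with differential `(a,b) ↦ (b,0)`. -/
def doubleC (M : ModuleCat.{u} R) : CochainComplex (ModuleCat.{u} R) ℤ where
  X _ := ModuleCat.of R (M × M)
  d i j := if i + 1 = j then eMap M else 0
  shape i j h := if_neg h
  d_comp_d' i j k hij hjk := by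
    change i + 1 = j at hij
    change j + 1 = k at hjk
    show (if i + 1 = j then eMap M else 0) ≫ (if j + 1 = k then eMap M else 0) = 0
    rw [if_pos hij, if_pos hjk, eMap_comp_eMap]

lemma doubleC_d (M : ModuleCat.{u} R) {i j : ℤ} (h : i + 1 = j) :
    (doubleC M).d i j = eMap M := if_pos h

lemma injective_prod (M : ModuleCat.{u} R) (hM : Injective M) :
    Injective (ModuleCat.of R (M × M)) := by
  have : Injective (M ⊞ M : ModuleCat.{u} R) := by infer_instance
  exact Injective.of_iso (ModuleCat.biprodIsoProd M M) this

/-- `M` is isomorphic to the kernel of `eMap M`. -/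
noncomputable def kerEMapIso (M : ModuleCat.{u} R) :
    M ≅ ModuleCat.of R (LinearMap.ker (eMap M).hom) := by
  refine (LinearEquiv.ofBijective
    (LinearMap.codRestrict (LinearMap.ker (eMap M).hom) (LinearMap.inl R M M)
      (fun x => LinearMap.mem_ker.mpr rfl)) ⟨?_, ?_⟩).toModuleIso
  · intro a b hab
    exact congrArg (fun z : ↥(LinearMap.ker (eMap M).hom) => z.1.1) hab
  · intro z
    have hz : eMap M z.1 = 0 := z.2
    have h2 : (z.1 : M × M).2 = 0 := congrArg Prod.fst hz
    exact ⟨(z.1 : M × M).1, Subtype.ext (Prod.ext rfl h2.symm)⟩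

lemma isGI_of_injective (M : ModuleCat.{u} R) (hM : Injective M) :
    IsGorensteinInjective M := by
  have hd01 : (doubleC M).d 0 1 = eMap M := doubleC_d M (i := 0) (j := 1) (by norm_num)
  refine ⟨doubleC M, fun i => injective_prod M hM, ?_, ⟨?_⟩, ?_⟩
  · intro i
    rw [exactAt_iff_elemZ (doubleC M) (i - 1) i (i + 1) (by omega) rfl,
      doubleC_d M (i := i - 1) (j := i) (by omega), doubleC_d M (i := i) (j := i + 1) rfl]
    intro x hx
    have h2 : x.2 = 0 := congrArg Prod.fst hx
    exact ⟨(0, x.1), Prod.ext rfl h2.symm⟩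
  · exact kerEMapIso M ≪≫ (ModuleCat.kernelIsoKer (eMap M)).symm ≪≫
      eqToIso (congrArg (fun φ : ModuleCat.of R (M × M) ⟶ ModuleCat.of R (M × M) => kernel φ) hd01.symm)
  · intro I _ i f hf
    rw [doubleC_d M (i := i) (j := i + 1) rfl] at hf
    refine ⟨ModuleCat.ofHom (LinearMap.prod 0 ((LinearMap.fst R M M).comp f.hom)), ?_⟩
    rw [doubleC_d M (i := i - 1) (j := i) (by omega)]
    apply ModuleCat.hom_ext
    apply LinearMap.ext; intro a
    have h2 : (f a).2 = 0 := by
      have h3 : eMap M (f a) = 0 := by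
        calc eMap M (f a) = (f ≫ eMap M) a := rfl
        _ = (0 : I ⟶ ModuleCat.of R (M × M)) a := congrArg (fun t : I ⟶ ModuleCat.of R (M × M) => t a) hf
        _ = 0 := rfl
      exact congrArg Prod.fst h3
    exact Prod.ext rfl h2

lemma subsingleton_of_isZero {X : ModuleCat.{u} R} (h : IsZero X) : Subsingleton X := by
  constructor
  intro a b
  have h1 : (𝟙 X : X ⟶ X) = 0 := h.eq_of_src _ _
  calc a = (𝟙 X : X ⟶ X) a := rfl
  _ = (0 : X ⟶ X) a := by rw [h1]
  _ = (0 : X ⟶ X) b := rfl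
  _ = (𝟙 X : X ⟶ X) b := by rw [h1]
  _ = b := rfl

/-- `Ext¹(M, N) = 0` iff one-cocycles on a given projective resolution are coboundaries. -/
lemma extVanish_one_iff (M N : ModuleCat.{u} R) (P : ProjectiveResolution M) :
    extVanish 1 M N ↔ ∀ β : P.complex.X 1 ⟶ N, P.complex.d 2 1 ≫ β = 0 →
      ∃ γ : P.complex.X 0 ⟶ N, P.complex.d 1 0 ≫ γ = β := by
  have e := P.isoExt (R := R) 1 N
  have eq : ((forget (ModuleCat.{u} R)).mapIso e).toEquiv =
    ((forget (ModuleCat.{u} R)).mapIso e).toEquiv := rfl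
  have hiff : extVanish 1 M N ↔ ((P.complex.linearYonedaObj R N).ExactAt 1) := by
    rw [HomologicalComplex.exactAt_iff_isZero_homology]
    constructor
    · intro h
      have : Subsingleton ((P.complex.linearYonedaObj R N).homology 1) :=
        Equiv.subsingleton ((forget _).mapIso e).toEquiv.symm
      exact ModuleCat.isZero_of_subsingleton _
    · intro h
      have : Subsingleton ((P.complex.linearYonedaObj R N).homology 1) :=
        subsingleton_of_isZero h
      exact Equiv.subsingleton ((forget _).mapIso e).toEquiv
  rw [hiff, exactAt_iff_elem _ 0 1 2
    (ComplexShape.prev_eq' _ (by simp)) (ComplexShape.next_eq' _ (by simp))]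
  have hd12 : ∀ β : P.complex.X 1 ⟶ N,
      (P.complex.linearYonedaObj R N).d 1 2 β = P.complex.d 2 1 ≫ β := fun β => rfl
  have hd01 : ∀ γ : P.complex.X 0 ⟶ N,
      (P.complex.linearYonedaObj R N).d 0 1 γ = P.complex.d 1 0 ≫ γ := fun γ => rfl
  constructor
  · intro h β hβ
    obtain ⟨γ, hγ⟩ := h β (by rw [hd12]; exact hβ)
    exact ⟨γ, (hd01 γ).symm.trans hγ⟩
  · intro h x hx
    obtain ⟨γ, hγ⟩ := h x ((hd12 x).symm.trans hx)
    exact ⟨γ, (hd01 γ).trans hγ⟩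

lemma extVanish_of_injective_of_gi (M E : ModuleCat.{u} R) (hM : Injective M)
    (hE : IsGorensteinInjective E) : extVanish 1 M E := by
  obtain ⟨C, hInj, hex, ⟨φ⟩, hLift⟩ := hE
  set P := ProjectiveResolution.of M with hP
  rw [extVanish_one_iff M E P]
  intro β₀ hβ₀
  set e : (kernel (C.d 0 1) : ModuleCat.{u} R) ⟶ C.X 0 := kernel.ι (C.d 0 1) with he
  set β : P.complex.X 1 ⟶ kernel (C.d 0 1) := β₀ ≫ φ.hom with hβdef
  suffices h : ∃ γ : P.complex.X 0 ⟶ kernel (C.d 0 1), P.complex.d 1 0 ≫ γ = β by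
    obtain ⟨γ, hγ⟩ := h
    refine ⟨γ ≫ φ.inv, ?_⟩
    rw [← Category.assoc, hγ, hβdef, Category.assoc, Iso.hom_inv_id, Category.comp_id]
  set π : P.complex.X 0 ⟶ M := P.π.f 0 with hπ
  have hd10π : P.complex.d 1 0 ≫ π = 0 := P.complex_d_comp_π_f_zero
  -- the kernel of π as a module
  set Kmod : ModuleCat.{u} R := ModuleCat.of R (LinearMap.ker π.hom) with hKmod
  have hker : ∀ x : P.complex.X 1, P.complex.d 1 0 x ∈ LinearMap.ker π.hom := by
    intro x
    rw [LinearMap.mem_ker]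
    calc π (P.complex.d 1 0 x) = (P.complex.d 1 0 ≫ π) x := rfl
    _ = (0 : P.complex.X 1 ⟶ M) x := by rw [hd10π]
    _ = 0 := rfl
  set D : P.complex.X 1 ⟶ Kmod :=
    ModuleCat.ofHom (LinearMap.codRestrict _ (P.complex.d 1 0).hom hker) with hD
  set ι : Kmod ⟶ P.complex.X 0 := ModuleCat.ofHom (LinearMap.ker π.hom).subtype with hι
  have hDι : D ≫ ι = P.complex.d 1 0 := rfl
  haveI hmonoι : Mono ι := by
    rw [ModuleCat.mono_iff_injective]
    exact Subtype.val_injective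
  -- the short complex `P₂ → P₁ → Kmod` is exact with epi second map
  have hS0 : P.complex.d 2 1 ≫ D = 0 := by
    apply ModuleCat.hom_ext
    apply LinearMap.ext
    intro x
    apply Subtype.ext
    exact (by rw [P.complex.d_comp_d] :
      (P.complex.d 2 1 ≫ P.complex.d 1 0) x = (0 : P.complex.X 2 ⟶ P.complex.X 0) x)
  set S : ShortComplex (ModuleCat.{u} R) := ShortComplex.mk _ _ hS0 with hSdef
  have hSexact : S.Exact := by
    rw [S.moduleCat_exact_iff]
    intro x hx
    have hx0 : P.complex.d 1 0 x = 0 := congrArg Subtype.val hx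
    have := (exactAt_iff_elem P.complex 2 1 0
      (ComplexShape.prev_eq' _ (by simp)) (ComplexShape.next_eq' _ (by simp))).1
      (P.complex_exactAt_succ 0)
    exact this x hx0
  haveI hepiD : Epi S.g := by
    have : Epi D := by
      rw [ModuleCat.epi_iff_surjective]
      intro z
      have hz : π z.1 = 0 := z.2
      have hex0 := P.exact₀
      rw [ShortComplex.moduleCat_exact_iff] at hex0
      obtain ⟨y, hy⟩ := hex0 z.1 hz
      exact ⟨y, Subtype.ext hy⟩
    exact this
  have hβe0 : S.f ≫ β = 0 := by
    show P.complex.d 2 1 ≫ β = 0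
    rw [hβdef, ← Category.assoc, hβ₀, Limits.zero_comp]
  set b : Kmod ⟶ kernel (C.d 0 1) := hSexact.desc β hβe0 with hb
  have hDb : D ≫ b = β := hSexact.g_desc β hβe0
  -- extend `b ≫ e` along `ι` using injectivity of `C.X 0`
  haveI := hInj 0
  set h : P.complex.X 0 ⟶ C.X 0 := Injective.factorThru (b ≫ e) ι with hh
  have hιh : ι ≫ h = b ≫ e := Injective.comp_factorThru _ _
  have hd10h : P.complex.d 1 0 ≫ h = β ≫ e := by
    rw [← hDι, Category.assoc, hιh, ← Category.assoc, hDb]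
  -- descend `h ≫ C.d 0 1` to `m : M ⟶ C.X 1`
  have hm0 : P.complex.d 1 0 ≫ (h ≫ C.d 0 1) = 0 := by
    rw [← Category.assoc, hd10h, Category.assoc, kernel.condition, Limits.comp_zero]
  haveI : Epi (ShortComplex.mk (P.complex.d 1 0) π P.complex_d_comp_π_f_zero).g := by
    show Epi (P.π.f 0)
    infer_instance
  set m : M ⟶ C.X 1 := P.exact₀.desc (h ≫ C.d 0 1) hm0 with hm
  have hπm : π ≫ m = h ≫ C.d 0 1 := P.exact₀.g_desc _ hm0
  have hmd12 : m ≫ C.d 1 (1 + 1) = 0 := by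
    haveI : Epi π := by show Epi (P.π.f 0); infer_instance
    rw [← cancel_epi π, ← Category.assoc, hπm, Limits.comp_zero]
    show (h ≫ C.d 0 1) ≫ C.d 1 2 = 0
    rw [Category.assoc, C.d_comp_d, Limits.comp_zero]
  obtain ⟨g1, hg1⟩ := hLift M hM 1 m hmd12
  have hfactor : (h - π ≫ g1 ≫ eqToHom (congrArg C.X (show (1:ℤ) - 1 = 0 by norm_num)))
      ≫ C.d 0 1 = 0 := by
    rw [Preadditive.sub_comp, Category.assoc, Category.assoc,
      ← eqToHom_d C (show (1:ℤ) - 1 = 0 by norm_num), ← hg1, hπm]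
    simp
  refine ⟨kernel.lift (C.d 0 1) _ hfactor, ?_⟩
  rw [← cancel_mono e, Category.assoc]
  show P.complex.d 1 0 ≫ (kernel.lift (C.d 0 1) _ hfactor ≫ kernel.ι _) = β ≫ e
  rw [kernel.lift_ι, Preadditive.comp_sub, ← Category.assoc, hd10π, Limits.zero_comp,
    sub_zero, hd10h]

lemma injective_of_gi_perp (M : ModuleCat.{u} R) (hGI : IsGorensteinInjective M)
    (hperp : MemPerpGI M) : Injective M := by
  obtain ⟨C, hInj, hex, ⟨φ⟩, hLift⟩ := hGI
  -- `q : C.X (-1) ⟶ kernel (C.d 0 1)` is epi with kernel `E₁ := kernel (C.d (-1) 0)`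
  set Z0 : ModuleCat.{u} R := kernel (C.d 0 1) with hZ0
  set q : C.X (-1) ⟶ Z0 := kernel.lift (C.d 0 1) (C.d (-1) 0) (C.d_comp_d _ _ _) with hq
  have hqι : q ≫ kernel.ι (C.d 0 1) = C.d (-1) 0 := kernel.lift_ι _ _ _
  have hιinj : Function.Injective (kernel.ι (C.d 0 1)) := by
    rw [← ModuleCat.mono_iff_injective]
    infer_instance
  haveI hepiq : Epi q := by
    rw [ModuleCat.epi_iff_surjective]
    intro z
    have hz : C.d 0 1 (kernel.ι (C.d 0 1) z) = 0 := by
      calc C.d 0 1 (kernel.ι (C.d 0 1) z) = (kernel.ι (C.d 0 1) ≫ C.d 0 1) z := rfl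
      _ = (0 : Z0 ⟶ C.X 1) z := by rw [kernel.condition]
      _ = 0 := rfl
    obtain ⟨y, hy⟩ := (exactAt_iff_elemZ C (-1) 0 1 (by norm_num) (by norm_num)).1
      (hex 0) (kernel.ι (C.d 0 1) z) hz
    refine ⟨y, hιinj ?_⟩
    calc kernel.ι (C.d 0 1) (q y) = (q ≫ kernel.ι (C.d 0 1)) y := rfl
    _ = C.d (-1) 0 y := by rw [hqι]
    _ = kernel.ι (C.d 0 1) z := hy
  set E1 : ModuleCat.{u} R := kernel (C.d (-1) 0) with hE1
  have hE1GI : IsGorensteinInjective E1 := by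
    have := ker_d_isGI C hInj hex hLift (-1)
    exact this
  set e : E1 ⟶ C.X (-1) := kernel.ι (C.d (-1) 0) with he
  have heq : e ≫ q = 0 := by
    rw [← cancel_mono (kernel.ι (C.d 0 1)), Category.assoc, hqι, kernel.condition,
      Limits.zero_comp]
  set g : C.X (-1) ⟶ M := q ≫ φ.inv with hg
  haveI hepig : Epi g := epi_comp _ _
  have hgφ : g ≫ φ.hom = q := by rw [hg, Category.assoc, Iso.inv_hom_id, Category.comp_id]
  -- projective resolution setup
  set P := ProjectiveResolution.of M with hP
  set π : P.complex.X 0 ⟶ M := P.π.f 0 with hπ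
  have hd10π : P.complex.d 1 0 ≫ π = 0 := P.complex_d_comp_π_f_zero
  haveI : Projective (P.complex.X 0) := P.projective 0
  set α : P.complex.X 0 ⟶ C.X (-1) := Projective.factorThru π g with hα
  have hαg : α ≫ g = π := Projective.factorThru_comp _ _
  have hαq : α ≫ q = π ≫ φ.hom := by rw [← hgφ, ← Category.assoc, hαg]
  have hβ0 : (P.complex.d 1 0 ≫ α) ≫ C.d (-1) 0 = 0 := by
    calc (P.complex.d 1 0 ≫ α) ≫ C.d (-1) 0
        = P.complex.d 1 0 ≫ (α ≫ q) ≫ kernel.ι (C.d 0 1) := by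
          rw [← hqι]; simp only [Category.assoc]
    _ = (P.complex.d 1 0 ≫ π) ≫ φ.hom ≫ kernel.ι (C.d 0 1) := by
          rw [hαq]; simp only [Category.assoc]
    _ = 0 := by rw [hd10π, Limits.zero_comp]
  set β : P.complex.X 1 ⟶ E1 := kernel.lift (C.d (-1) 0) _ hβ0 with hβ
  have hβe : β ≫ e = P.complex.d 1 0 ≫ α := kernel.lift_ι _ _ _
  have hcocycle : P.complex.d 2 1 ≫ β = 0 := by
    rw [← cancel_mono e, Category.assoc, hβe, ← Category.assoc, P.complex.d_comp_d,
      Limits.zero_comp, Limits.zero_comp]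
  obtain ⟨γ, hγ⟩ := (extVanish_one_iff M E1 P).1 (hperp E1 hE1GI) β hcocycle
  -- construct a section of `g`
  have hs0 : P.complex.d 1 0 ≫ (α - γ ≫ e) = 0 := by
    rw [Preadditive.comp_sub, ← Category.assoc, hγ, hβe, sub_self]
  haveI : Epi (ShortComplex.mk (P.complex.d 1 0) π P.complex_d_comp_π_f_zero).g := by
    show Epi (P.π.f 0)
    infer_instance
  set s : M ⟶ C.X (-1) := P.exact₀.desc (α - γ ≫ e) hs0 with hs
  have hπs : π ≫ s = α - γ ≫ e := P.exact₀.g_desc _ hs0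
  have hsg : s ≫ g = 𝟙 M := by
    haveI : Epi π := by show Epi (P.π.f 0); infer_instance
    rw [← cancel_epi π, ← Category.assoc, hπs, Preadditive.sub_comp, hαg, Category.assoc,
      Category.comp_id]
    have hegz : e ≫ g = 0 := by
      rw [hg, ← Category.assoc, heq, Limits.zero_comp]
    rw [hegz, Limits.comp_zero, sub_zero]
  -- `M` is a retract of the injective module `C.X (-1)`
  constructor
  intro X Y f i hmono
  haveI := hInj (-1)
  refine ⟨Injective.factorThru (f ≫ s) i ≫ g, ?_⟩
  rw [← Category.assoc, Injective.comp_factorThru, Category.assoc, hsg, Category.comp_id]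

end Aux13

/-- `GI ∩ ^⊥GI` is exactly the class of injective modules. -/
theorem stmt13 {R : Type u} [CommRing R] (M : ModuleCat.{u} R) :
    (IsGorensteinInjective M ∧ MemPerpGI M) ↔ Injective M := by
  constructor
  · rintro ⟨hGI, hperp⟩
    exact injective_of_gi_perp M hGI hperp
  · intro hM
    exact ⟨isGI_of_injective M hM, fun E hE => extVanish_of_injective_of_gi M E hM hE⟩
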